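/- Let n ≥ 1 be an integer and s ≥ s₀ > n/2. There exist constants C(s₀), C(s) > 0 such that for all u, v : ℤⁿ → ℂ with ‖u‖_s < ∞ and ‖v‖_s < ∞, the convolution (u∗v)_i := Σ_{j∈ℤⁿ} u_j v_{i−j} is well defined (the sums converge absolutely) and satisfies the asymmetric tame product estimate ‖u∗v‖_s ≤ C(s₀) ‖u‖_s ‖v‖_{s₀} + C(s) ‖u‖_{s₀} ‖v‖_s. (On the function side, u∗v is the product of the two periodic functions with Fourier coefficients u and v.) -/

import Mathlib

open scoped ENNReal

/-- `|i| := max_k |i_k|` for a multi-index `i ∈ ℤⁿ`. -/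
def absIdx {n : ℕ} (i : Fin n → ℤ) : ℕ :=
  Finset.univ.sup fun k => (i k).natAbs

/-- `⟨i⟩ := max(1, |i|)`. -/
noncomputable def wt {n : ℕ} (i : Fin n → ℤ) : ℝ := max 1 (absIdx i : ℝ)

/-- Sobolev norm `‖u‖_s := (Σ_i ⟨i⟩^{2s} |u_i|²)^{1/2}` (valued in `ℝ≥0∞`). -/
noncomputable def sobNorm {n : ℕ} (u : (Fin n → ℤ) → ℂ) (s : ℝ) : ℝ≥0∞ :=
  (∑' i : Fin n → ℤ, ENNReal.ofReal (wt i ^ (2 * s)) * (‖u i‖₊ : ℝ≥0∞) ^ 2) ^ (1/2 : ℝ)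

open MeasureTheory

section
variable {ι : Type*}

lemma conj22 : Real.HolderConjugate 2 2 := ⟨by norm_num, by norm_num, by norm_num⟩

/-- Hölder (Cauchy–Schwarz) for ENNReal tsums. -/
lemma tsum_CS (f g : ι → ℝ≥0∞) :
    ∑' i, f i * g i ≤ (∑' i, f i ^ (2:ℝ)) ^ (1/2 : ℝ) * (∑' i, g i ^ (2:ℝ)) ^ (1/2 : ℝ) := by
  letI : MeasurableSpace ι := ⊤
  haveI : MeasurableSingletonClass ι := ⟨fun _ => trivial⟩
  have h := ENNReal.lintegral_mul_le_Lp_mul_Lq (Measure.count : Measure ι)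
    conj22 (f := f) (g := g) measurable_from_top.aemeasurable
    measurable_from_top.aemeasurable
  simpa [lintegral_count] using h

/-- Minkowski for ENNReal tsums, p = 2. -/
lemma tsum_Mink (f g : ι → ℝ≥0∞) :
    (∑' i, (f i + g i) ^ (2:ℝ)) ^ (1/2 : ℝ) ≤
      (∑' i, f i ^ (2:ℝ)) ^ (1/2 : ℝ) + (∑' i, g i ^ (2:ℝ)) ^ (1/2 : ℝ) := by
  letI : MeasurableSpace ι := ⊤
  haveI : MeasurableSingletonClass ι := ⟨fun _ => trivial⟩
  have h := ENNReal.lintegral_Lp_add_le (μ := (Measure.count : Measure ι))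
    (f := f) (g := g) measurable_from_top.aemeasurable measurable_from_top.aemeasurable
    (p := 2) one_le_two
  simpa [lintegral_count] using h
end

section Young
variable {ι : Type*} [AddCommGroup ι]

lemma shift_tsum (b : ι → ℝ≥0∞) (i : ι) : ∑' j, b (i - j) = ∑' j, b j :=
  (Equiv.subLeft i).tsum_eq b

lemma conv_sq_le (a b : ι → ℝ≥0∞) (i : ι) :
    (∑' j, a j * b (i - j)) ^ (2:ℝ) ≤ (∑' j, b j) * ∑' j, a j ^ (2:ℝ) * b (i - j) := by
  have key : ∑' j, a j * b (i - j) ≤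
      (∑' j, a j ^ (2:ℝ) * b (i - j)) ^ (1/2:ℝ) * (∑' j, b j) ^ (1/2:ℝ) := by
    have h := tsum_CS (fun j => a j * b (i - j) ^ (1/2:ℝ)) (fun j => b (i - j) ^ (1/2:ℝ))
    have e1 : ∀ j, (a j * b (i - j) ^ (1/2:ℝ)) * b (i - j) ^ (1/2:ℝ) = a j * b (i - j) := by
      intro j
      rw [mul_assoc, ← ENNReal.rpow_add_of_nonneg _ _ (by norm_num) (by norm_num)]
      norm_num
    have e2 : ∀ j, (a j * b (i - j) ^ (1/2:ℝ)) ^ (2:ℝ) = a j ^ (2:ℝ) * b (i - j) := by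
      intro j
      rw [ENNReal.mul_rpow_of_nonneg _ _ (by norm_num), ← ENNReal.rpow_mul]
      norm_num
    have e3 : ∀ j, (b (i - j) ^ (1/2:ℝ)) ^ (2:ℝ) = b (i - j) := by
      intro j; rw [← ENNReal.rpow_mul]; norm_num
    simp only [e1, e2, e3] at h
    rwa [shift_tsum b i] at h
  calc (∑' j, a j * b (i - j)) ^ (2:ℝ)
      ≤ ((∑' j, a j ^ (2:ℝ) * b (i - j)) ^ (1/2:ℝ) * (∑' j, b j) ^ (1/2:ℝ)) ^ (2:ℝ) :=
        ENNReal.rpow_le_rpow key (by norm_num)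
    _ = (∑' j, b j) * ∑' j, a j ^ (2:ℝ) * b (i - j) := by
        rw [ENNReal.mul_rpow_of_nonneg _ _ (by norm_num), ← ENNReal.rpow_mul,
          ← ENNReal.rpow_mul]
        norm_num [mul_comm]

lemma young (a b : ι → ℝ≥0∞) :
    (∑' i, (∑' j, a j * b (i - j)) ^ (2:ℝ)) ^ (1/2:ℝ) ≤
      (∑' i, a i ^ (2:ℝ)) ^ (1/2:ℝ) * (∑' i, b i) := by
  have h1 : ∑' i, (∑' j, a j * b (i - j)) ^ (2:ℝ) ≤
      (∑' i, a i ^ (2:ℝ)) * (∑' i, b i) ^ (2:ℝ) := by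
    calc ∑' i, (∑' j, a j * b (i - j)) ^ (2:ℝ)
        ≤ ∑' i, (∑' j, b j) * ∑' j, a j ^ (2:ℝ) * b (i - j) :=
          ENNReal.tsum_le_tsum fun i => conv_sq_le a b i
      _ = (∑' j, b j) * ∑' i, ∑' j, a j ^ (2:ℝ) * b (i - j) := ENNReal.tsum_mul_left
      _ = (∑' j, b j) * ∑' j, ∑' i, a j ^ (2:ℝ) * b (i - j) := by rw [ENNReal.tsum_comm]
      _ = (∑' j, b j) * ∑' j, a j ^ (2:ℝ) * ∑' i, b (i - j) := by
          congr 1; exact tsum_congr fun j => ENNReal.tsum_mul_left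
      _ = (∑' i, a i ^ (2:ℝ)) * (∑' i, b i) ^ (2:ℝ) := by
          have : ∀ j : ι, ∑' i, b (i - j) = ∑' i, b i := fun j =>
            (Equiv.subRight j).tsum_eq b
          simp only [this]
          rw [ENNReal.tsum_mul_right]
          ring_nf
          rw [ENNReal.rpow_two]
          ring
  calc (∑' i, (∑' j, a j * b (i - j)) ^ (2:ℝ)) ^ (1/2:ℝ)
      ≤ ((∑' i, a i ^ (2:ℝ)) * (∑' i, b i) ^ (2:ℝ)) ^ (1/2:ℝ) :=
        ENNReal.rpow_le_rpow h1 (by norm_num)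
    _ = (∑' i, a i ^ (2:ℝ)) ^ (1/2:ℝ) * (∑' i, b i) := by
        rw [ENNReal.mul_rpow_of_nonneg _ _ (by norm_num), ← ENNReal.rpow_mul]
        norm_num
end Young

section Wt
variable {n : ℕ}

lemma one_le_wt (i : Fin n → ℤ) : 1 ≤ wt i := le_max_left _ _
lemma wt_pos (i : Fin n → ℤ) : 0 < wt i := lt_of_lt_of_le one_pos (one_le_wt i)

lemma absIdx_add_le (x y : Fin n → ℤ) : absIdx (x + y) ≤ absIdx x + absIdx y := by
  refine Finset.sup_le fun k _ => ?_
  calc ((x + y) k).natAbs = (x k + y k).natAbs := rfl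
    _ ≤ (x k).natAbs + (y k).natAbs := Int.natAbs_add_le _ _
    _ ≤ absIdx x + absIdx y :=
        add_le_add (Finset.le_sup (f := fun k => (x k).natAbs) (Finset.mem_univ k))
          (Finset.le_sup (f := fun k => (y k).natAbs) (Finset.mem_univ k))

lemma wt_add_le (x y : Fin n → ℤ) : wt (x + y) ≤ wt x + wt y := by
  refine max_le (by have := one_le_wt x; have := one_le_wt y; nlinarith [one_le_wt y]) ?_
  calc (absIdx (x+y) : ℝ) ≤ ((absIdx x + absIdx y : ℕ) : ℝ) := by
        exact_mod_cast absIdx_add_le x y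
    _ = (absIdx x : ℝ) + absIdx y := by push_cast; ring
    _ ≤ wt x + wt y := add_le_add (le_max_right _ _) (le_max_right _ _)

lemma wt_rpow_triangle {t : ℝ} (ht : 0 ≤ t) (x y : Fin n → ℤ) :
    wt (x + y) ^ t ≤ 2 ^ t * (wt x ^ t + wt y ^ t) := by
  have h1 : wt (x + y) ≤ 2 * max (wt x) (wt y) := by
    refine (wt_add_le x y).trans ?_
    have := le_max_left (wt x) (wt y); have := le_max_right (wt x) (wt y); linarith
  calc wt (x + y) ^ t ≤ (2 * max (wt x) (wt y)) ^ t :=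
        Real.rpow_le_rpow (wt_pos _).le h1 ht
    _ = 2 ^ t * max (wt x) (wt y) ^ t := Real.mul_rpow (by norm_num) (le_trans (wt_pos x).le (le_max_left _ _))
    _ ≤ 2 ^ t * (wt x ^ t + wt y ^ t) := by
        gcongr
        rcases max_cases (wt x) (wt y) with ⟨h, _⟩ | ⟨h, _⟩ <;> rw [h]
        · nlinarith [Real.rpow_nonneg (wt_pos y).le t]
        · nlinarith [Real.rpow_nonneg (wt_pos x).le t]
end Wt

section Ksec
noncomputable def w1 (m : ℤ) : ℝ := max 1 (m.natAbs : ℝ)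

lemma one_le_w1 (m : ℤ) : 1 ≤ w1 m := le_max_left _ _
lemma w1_pos (m : ℤ) : 0 < w1 m := lt_of_lt_of_le one_pos (one_le_w1 m)

lemma w1_summable {p : ℝ} (hp : 1 < p) : Summable (fun m : ℤ => w1 m ^ (-p)) := by
  have hnat : Summable (fun k : ℕ => w1 (k : ℤ) ^ (-p)) := by
    rw [← summable_nat_add_iff 1]
    have base : Summable (fun k : ℕ => (((k : ℝ) + 1) ^ p)⁻¹) := by
      have := (summable_nat_add_iff (f := fun k : ℕ => (((k : ℝ)) ^ p)⁻¹) 1).2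
        (Real.summable_nat_rpow_inv.2 hp)
      simpa using this
    refine base.congr fun k => ?_
    have h1 : w1 ((k + 1 : ℕ) : ℤ) = (k : ℝ) + 1 := by
      simp only [w1, Int.natAbs_natCast]
      rw [max_eq_right (by push_cast; linarith)]
      push_cast; ring
    rw [h1, Real.rpow_neg (by positivity)]
  refine Summable.of_nat_of_neg hnat ?_
  refine hnat.congr fun k => ?_
  simp [w1]
lemma tsum_w1_lt_top {p : ℝ} (hp : 1 < p) :
    ∑' m : ℤ, ENNReal.ofReal (w1 m ^ (-p)) < ⊤ := by
  rw [← ENNReal.ofReal_tsum_of_nonneg (fun m => Real.rpow_nonneg (w1_pos m).le _)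
    (w1_summable hp)]
  exact ENNReal.ofReal_lt_top

def finConsEquiv (n : ℕ) : ℤ × (Fin n → ℤ) ≃ (Fin (n+1) → ℤ) where
  toFun pr := Fin.cons pr.1 pr.2
  invFun f := (f 0, fun k => f k.succ)
  left_inv pr := by simp
  right_inv f := Fin.cons_self_tail f

@[simp] lemma finConsEquiv_apply (n : ℕ) (pr : ℤ × (Fin n → ℤ)) :
    finConsEquiv n pr = Fin.cons pr.1 pr.2 := rfl

lemma tsum_pi_prod (g : ℤ → ℝ≥0∞) : ∀ n : ℕ,
    (∑' i : Fin n → ℤ, ∏ k, g (i k)) = (∑' m : ℤ, g m) ^ n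
  | 0 => by
    rw [tsum_eq_single (fun _ => 0) (fun b hb => absurd (Subsingleton.elim b _) hb)]
    simp
  | n + 1 => by
    set e := finConsEquiv n with he
    rw [← e.tsum_eq, pow_succ']
    have h0 : ∀ pr : ℤ × (Fin n → ℤ), (∏ k, g (e pr k)) = g pr.1 * ∏ k, g (pr.2 k) := by
      intro pr
      rw [Fin.prod_univ_succ]
      simp [he, Fin.cons_zero, Fin.cons_succ]
    calc ∑' pr : ℤ × (Fin n → ℤ), ∏ k, g (e pr k)
        = ∑' pr : ℤ × (Fin n → ℤ), g pr.1 * ∏ k, g (pr.2 k) := tsum_congr h0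
      _ = ∑' b : ℤ, ∑' c : Fin n → ℤ, g b * ∏ k, g (c k) :=
          ENNReal.tsum_prod (f := fun (b : ℤ) (c : Fin n → ℤ) => g b * ∏ k, g (c k))
      _ = ∑' b : ℤ, g b * ∑' c : Fin n → ℤ, ∏ k, g (c k) :=
          tsum_congr fun b => ENNReal.tsum_mul_left
      _ = (∑' m : ℤ, g m) * (∑' m : ℤ, g m) ^ n := by rw [ENNReal.tsum_mul_right, tsum_pi_prod g n]

lemma w1_le_wt {n : ℕ} (i : Fin n → ℤ) (k : Fin n) : w1 (i k) ≤ wt i := by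
  refine max_le (le_max_left _ _) (le_trans ?_ (le_max_right _ _))
  exact_mod_cast Nat.cast_le.2 (Finset.le_sup (f := fun k => (i k).natAbs) (Finset.mem_univ k))

lemma K_lt_top {n : ℕ} (hn : 1 ≤ n) {p : ℝ} (hp : (n : ℝ) < p) :
    ∑' i : Fin n → ℤ, ENNReal.ofReal (wt i ^ (-p)) < ⊤ := by
  have hn0 : (0:ℝ) < n := by exact_mod_cast hn
  have hq : 1 < p / n := (one_lt_div hn0).2 hp
  have hq0 : 0 ≤ p / n := by positivity
  have point : ∀ i : Fin n → ℤ,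
      ENNReal.ofReal (wt i ^ (-p)) ≤ ∏ k, ENNReal.ofReal (w1 (i k) ^ (-(p/n))) := by
    intro i
    have hprod : (∏ k, w1 (i k) ^ (p/n)) ≤ wt i ^ p := by
      calc (∏ k : Fin n, w1 (i k) ^ (p/n)) ≤ ∏ k : Fin n, wt i ^ (p/n) :=
            Finset.prod_le_prod (fun k _ => Real.rpow_nonneg (w1_pos _).le _)
              (fun k _ => Real.rpow_le_rpow (w1_pos _).le (w1_le_wt i k) hq0)
        _ = (wt i ^ (p/n)) ^ (n : ℕ) := by rw [Finset.prod_const, Finset.card_univ, Fintype.card_fin]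
        _ = wt i ^ p := by
            rw [← Real.rpow_natCast (wt i ^ (p/n)) n, ← Real.rpow_mul (wt_pos i).le]
            congr 1
            field_simp
    have hreal : wt i ^ (-p) ≤ ∏ k, w1 (i k) ^ (-(p/n)) := by
      have e1 : wt i ^ (-p) = (wt i ^ p)⁻¹ := Real.rpow_neg (wt_pos i).le p
      have e2 : (∏ k : Fin n, w1 (i k) ^ (-(p/n))) = (∏ k : Fin n, w1 (i k) ^ (p/n))⁻¹ := by
        rw [← Finset.prod_inv_distrib]
        exact Finset.prod_congr rfl fun k _ => Real.rpow_neg (w1_pos _).le _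
      rw [e1, e2]
      exact inv_anti₀ (Finset.prod_pos fun k _ => Real.rpow_pos_of_pos (w1_pos _) _) hprod
    calc ENNReal.ofReal (wt i ^ (-p)) ≤ ENNReal.ofReal (∏ k, w1 (i k) ^ (-(p/n))) :=
          ENNReal.ofReal_le_ofReal hreal
      _ = ∏ k, ENNReal.ofReal (w1 (i k) ^ (-(p/n))) := by
          induction (Finset.univ : Finset (Fin n)) using Finset.induction with
          | empty => simp
          | insert _ _ hx ih =>
            rw [Finset.prod_insert hx, Finset.prod_insert hx,
              ENNReal.ofReal_mul (Real.rpow_nonneg (w1_pos _).le _), ih]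
  calc (∑' i : Fin n → ℤ, ENNReal.ofReal (wt i ^ (-p)))
      ≤ ∑' i : Fin n → ℤ, ∏ k, ENNReal.ofReal (w1 (i k) ^ (-(p/n))) :=
        ENNReal.tsum_le_tsum point
    _ = (∑' m : ℤ, ENNReal.ofReal (w1 m ^ (-(p/n)))) ^ n :=
        tsum_pi_prod (fun m => ENNReal.ofReal (w1 m ^ (-(p/(n:ℝ))))) n
    _ < ⊤ := ENNReal.pow_lt_top (tsum_w1_lt_top hq)
end Ksec

section Main
variable {n : ℕ}

lemma one_le_W {t : ℝ} (ht : 0 ≤ t) (i : Fin n → ℤ) : 1 ≤ ENNReal.ofReal (wt i ^ t) := by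
  have : (1:ℝ) ≤ wt i ^ t := by
    calc (1:ℝ) = 1 ^ t := (Real.one_rpow t).symm
      _ ≤ wt i ^ t := Real.rpow_le_rpow zero_le_one (one_le_wt i) ht
  calc (1 : ℝ≥0∞) = ENNReal.ofReal 1 := ENNReal.ofReal_one.symm
    _ ≤ _ := ENNReal.ofReal_le_ofReal this

lemma sob_eq (u : (Fin n → ℤ) → ℂ) (t : ℝ) :
    sobNorm u t =
      (∑' i, (ENNReal.ofReal (wt i ^ t) * (‖u i‖₊ : ℝ≥0∞)) ^ (2:ℝ)) ^ (1/2:ℝ) := by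
  unfold sobNorm
  congr 1
  refine tsum_congr fun i => ?_
  rw [ENNReal.mul_rpow_of_nonneg _ _ (by norm_num), ENNReal.ofReal_rpow_of_pos
    (Real.rpow_pos_of_pos (wt_pos i) t), ← Real.rpow_mul (wt_pos i).le, ENNReal.rpow_two]
  rw [mul_comm t 2]

/-- `ℓ¹`-norm bounded by weighted `ℓ²`-norm. -/
lemma l1_le_weighted (t : ℝ) (V : (Fin n → ℤ) → ℝ≥0∞) :
    ∑' i, V i ≤ (∑' i : Fin n → ℤ, ENNReal.ofReal (wt i ^ (-(2*t)))) ^ (1/2:ℝ) *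
      (∑' i, (ENNReal.ofReal (wt i ^ t) * V i) ^ (2:ℝ)) ^ (1/2:ℝ) := by
  have key : ∀ i : Fin n → ℤ,
      V i = ENNReal.ofReal (wt i ^ (-t)) * (ENNReal.ofReal (wt i ^ t) * V i) := by
    intro i
    rw [← mul_assoc, ← ENNReal.ofReal_mul (Real.rpow_nonneg (wt_pos i).le _),
      ← Real.rpow_add (wt_pos i)]
    norm_num
  calc ∑' i, V i = ∑' i, ENNReal.ofReal (wt i ^ (-t)) * (ENNReal.ofReal (wt i ^ t) * V i) :=
        tsum_congr key
    _ ≤ (∑' i, ENNReal.ofReal (wt i ^ (-t)) ^ (2:ℝ)) ^ (1/2:ℝ) *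
        (∑' i, (ENNReal.ofReal (wt i ^ t) * V i) ^ (2:ℝ)) ^ (1/2:ℝ) := tsum_CS _ _
    _ = _ := by
        congr 2
        refine tsum_congr fun i => ?_
        rw [ENNReal.ofReal_rpow_of_pos (Real.rpow_pos_of_pos (wt_pos i) _),
          ← Real.rpow_mul (wt_pos i).le]
        ring_nf

lemma W_triangle {t : ℝ} (ht : 0 ≤ t) (i j : Fin n → ℤ) :
    ENNReal.ofReal (wt i ^ t) ≤ ENNReal.ofReal (2 ^ t) *
      (ENNReal.ofReal (wt j ^ t) + ENNReal.ofReal (wt (i - j) ^ t)) := by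
  have h := wt_rpow_triangle ht j (i - j)
  rw [add_sub_cancel] at h
  calc ENNReal.ofReal (wt i ^ t) ≤ ENNReal.ofReal (2 ^ t * (wt j ^ t + wt (i-j) ^ t)) :=
        ENNReal.ofReal_le_ofReal h
    _ = _ := by
        rw [ENNReal.ofReal_mul (by positivity),
          ENNReal.ofReal_add (Real.rpow_nonneg (wt_pos _).le _) (Real.rpow_nonneg (wt_pos _).le _)]
end Main

theorem stmt3 (n : ℕ) (hn : 1 ≤ n) (s₀ s : ℝ) (hs₀ : (n : ℝ) / 2 < s₀) (hs : s₀ ≤ s) :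
    ∃ C₀ C : ℝ, 0 < C₀ ∧ 0 < C ∧
      ∀ u v : (Fin n → ℤ) → ℂ, sobNorm u s < ⊤ → sobNorm v s < ⊤ →
        (∀ i : Fin n → ℤ, Summable fun j : Fin n → ℤ => ‖u j * v (i - j)‖) ∧
        sobNorm (fun i => ∑' j : Fin n → ℤ, u j * v (i - j)) s ≤
          ENNReal.ofReal C₀ * sobNorm u s * sobNorm v s₀ +
            ENNReal.ofReal C * sobNorm u s₀ * sobNorm v s := by
  have hn1 : (1:ℝ) ≤ n := by exact_mod_cast hn
  have hs₀pos : 0 < s₀ := by linarith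
  have hspos : 0 < s := lt_of_lt_of_le hs₀pos hs
  set K : ℝ≥0∞ := ∑' i : Fin n → ℤ, ENNReal.ofReal (wt i ^ (-(2*s₀))) with hKdef
  have hK : K < ⊤ := K_lt_top hn (by linarith)
  set c : ℝ≥0∞ := ENNReal.ofReal (2 ^ s) * K ^ (1/2:ℝ) with hcdef
  have hcfin : c ≠ ⊤ :=
    ENNReal.mul_ne_top ENNReal.ofReal_ne_top
      (ENNReal.rpow_lt_top_of_nonneg (by norm_num) hK.ne).ne
  have hCpos : (0:ℝ) < c.toReal + 1 := by positivity
  refine ⟨c.toReal + 1, c.toReal + 1, hCpos, hCpos, ?_⟩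
  have hCle : c ≤ ENNReal.ofReal (c.toReal + 1) := by
    calc c = ENNReal.ofReal c.toReal := (ENNReal.ofReal_toReal hcfin).symm
      _ ≤ _ := ENNReal.ofReal_le_ofReal (by linarith [ENNReal.toReal_nonneg (a := c)])
  intro u v hu hv
  set U : (Fin n → ℤ) → ℝ≥0∞ := fun i => (‖u i‖₊ : ℝ≥0∞) with hUdef
  set V : (Fin n → ℤ) → ℝ≥0∞ := fun i => (‖v i‖₊ : ℝ≥0∞) with hVdef
  set Ws : (Fin n → ℤ) → ℝ≥0∞ := fun i => ENNReal.ofReal (wt i ^ s) with hWsdef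
  set W0 : (Fin n → ℤ) → ℝ≥0∞ := fun i => ENNReal.ofReal (wt i ^ s₀) with hW0def
  have hueq : sobNorm u s = (∑' i, (Ws i * U i) ^ (2:ℝ)) ^ (1/2:ℝ) := sob_eq u s
  have hveq : sobNorm v s = (∑' i, (Ws i * V i) ^ (2:ℝ)) ^ (1/2:ℝ) := sob_eq v s
  have hueq0 : sobNorm u s₀ = (∑' i, (W0 i * U i) ^ (2:ℝ)) ^ (1/2:ℝ) := sob_eq u s₀
  have hveq0 : sobNorm v s₀ = (∑' i, (W0 i * V i) ^ (2:ℝ)) ^ (1/2:ℝ) := sob_eq v s₀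
  have husum : ∑' i, (Ws i * U i) ^ (2:ℝ) < ⊤ := by
    rw [hueq] at hu
    exact (ENNReal.rpow_lt_top_iff_of_pos (by norm_num)).1 hu
  have hvsum : ∑' i, (Ws i * V i) ^ (2:ℝ) < ⊤ := by
    rw [hveq] at hv
    exact (ENNReal.rpow_lt_top_iff_of_pos (by norm_num)).1 hv
  have hUle : ∀ i, U i ≤ Ws i * U i := fun i => by
    conv_lhs => rw [← one_mul (U i)]
    exact mul_le_mul_left (one_le_W hspos.le i) _
  have hVle : ∀ i, V i ≤ Ws i * V i := fun i => by
    conv_lhs => rw [← one_mul (V i)]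
    exact mul_le_mul_left (one_le_W hspos.le i) _
  have hU2 : ∑' i, U i ^ (2:ℝ) < ⊤ :=
    lt_of_le_of_lt (ENNReal.tsum_le_tsum fun i =>
      ENNReal.rpow_le_rpow (hUle i) (by norm_num)) husum
  have hV2 : ∑' i, V i ^ (2:ℝ) < ⊤ :=
    lt_of_le_of_lt (ENNReal.tsum_le_tsum fun i =>
      ENNReal.rpow_le_rpow (hVle i) (by norm_num)) hvsum
  have habs : ∀ i, ∑' j, U j * V (i - j) < ⊤ := by
    intro i
    calc ∑' j, U j * V (i - j)
        ≤ (∑' j, U j ^ (2:ℝ)) ^ (1/2:ℝ) * (∑' j, V (i - j) ^ (2:ℝ)) ^ (1/2:ℝ) := tsum_CS _ _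
      _ = (∑' j, U j ^ (2:ℝ)) ^ (1/2:ℝ) * (∑' j, V j ^ (2:ℝ)) ^ (1/2:ℝ) := by
          rw [show (∑' (j : Fin n → ℤ), V (i - j) ^ (2:ℝ)) = ∑' j, V j ^ (2:ℝ) from
            shift_tsum (fun j => V j ^ (2:ℝ)) i]
      _ < ⊤ := ENNReal.mul_lt_top
          (ENNReal.rpow_lt_top_of_nonneg (by norm_num) hU2.ne)
          (ENNReal.rpow_lt_top_of_nonneg (by norm_num) hV2.ne)
  have hnnsum : ∀ i, Summable fun j => ‖u j * v (i - j)‖₊ := by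
    intro i
    refine ENNReal.tsum_coe_ne_top_iff_summable.1 ?_
    refine ne_top_of_le_ne_top (habs i).ne (le_of_eq (tsum_congr fun j => ?_))
    rw [nnnorm_mul, ENNReal.coe_mul]
  have hsummable : ∀ i : Fin n → ℤ, Summable fun j : Fin n → ℤ => ‖u j * v (i - j)‖ := by
    intro i
    exact (NNReal.summable_coe.2 (hnnsum i)).congr fun j => coe_nnnorm _
  refine ⟨hsummable, ?_⟩
  have hPnorm : ∀ i, (‖∑' j : Fin n → ℤ, u j * v (i - j)‖₊ : ℝ≥0∞) ≤ ∑' j, U j * V (i - j) := by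
    intro i
    have h1 : (‖∑' j : Fin n → ℤ, u j * v (i - j)‖₊ : ℝ≥0∞) ≤
        ∑' j : Fin n → ℤ, (‖u j * v (i - j)‖₊ : ℝ≥0∞) := by
      rw [← ENNReal.coe_tsum (hnnsum i)]
      exact ENNReal.coe_le_coe.2 (nnnorm_tsum_le (hnnsum i))
    refine h1.trans (le_of_eq (tsum_congr fun j => ?_))
    rw [nnnorm_mul, ENNReal.coe_mul]
  set X : (Fin n → ℤ) → ℝ≥0∞ := fun i => ∑' j, (Ws j * U j) * V (i - j) with hXdef
  set Y : (Fin n → ℤ) → ℝ≥0∞ := fun i => ∑' j, (Ws j * V j) * U (i - j) with hYdef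
  have step2 : ∀ i, Ws i * (‖∑' j : Fin n → ℤ, u j * v (i - j)‖₊ : ℝ≥0∞) ≤
      ENNReal.ofReal (2 ^ s) * (X i + Y i) := by
    intro i
    calc Ws i * (‖∑' j : Fin n → ℤ, u j * v (i - j)‖₊ : ℝ≥0∞)
        ≤ Ws i * ∑' j, U j * V (i - j) := mul_le_mul_right (hPnorm i) _
      _ = ∑' j, Ws i * (U j * V (i - j)) := ENNReal.tsum_mul_left.symm
      _ ≤ ∑' j, (ENNReal.ofReal (2 ^ s) * (Ws j + Ws (i - j))) * (U j * V (i - j)) :=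
          ENNReal.tsum_le_tsum fun j =>
            mul_le_mul_left (W_triangle hspos.le i j) _
      _ = ENNReal.ofReal (2 ^ s) * ∑' j, (Ws j + Ws (i - j)) * (U j * V (i - j)) := by
          rw [← ENNReal.tsum_mul_left]
          exact tsum_congr fun j => by ring
      _ = ENNReal.ofReal (2 ^ s) *
          (X i + ∑' j, U j * (Ws (i - j) * V (i - j))) := by
          congr 1
          rw [hXdef, ← ENNReal.tsum_add]
          exact tsum_congr fun j => by ring
      _ = ENNReal.ofReal (2 ^ s) * (X i + Y i) := by
          congr 2
          calc ∑' j, U j * (Ws (i - j) * V (i - j))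
              = ∑' j, U (i - j) * (Ws (i - (i - j)) * V (i - (i - j))) :=
                ((Equiv.subLeft i).tsum_eq fun j => U j * (Ws (i - j) * V (i - j))).symm
            _ = Y i := tsum_congr fun j => by rw [sub_sub_cancel]; ring
  calc sobNorm (fun i => ∑' j : Fin n → ℤ, u j * v (i - j)) s
      = (∑' i, (Ws i * (‖∑' j : Fin n → ℤ, u j * v (i - j)‖₊ : ℝ≥0∞)) ^ (2:ℝ)) ^ (1/2:ℝ) :=
        sob_eq _ s
    _ ≤ (∑' i, (ENNReal.ofReal (2 ^ s) * (X i + Y i)) ^ (2:ℝ)) ^ (1/2:ℝ) :=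
        ENNReal.rpow_le_rpow (ENNReal.tsum_le_tsum fun i =>
          ENNReal.rpow_le_rpow (step2 i) (by norm_num)) (by norm_num)
    _ = ENNReal.ofReal (2 ^ s) * (∑' i, (X i + Y i) ^ (2:ℝ)) ^ (1/2:ℝ) := by
        rw [tsum_congr fun i => ENNReal.mul_rpow_of_nonneg (ENNReal.ofReal (2 ^ s))
            (X i + Y i) (by norm_num : (0:ℝ) ≤ 2),
          ENNReal.tsum_mul_left, ENNReal.mul_rpow_of_nonneg _ _ (by norm_num),
          ← ENNReal.rpow_mul]
        norm_num
    _ ≤ ENNReal.ofReal (2 ^ s) *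
        ((∑' i, X i ^ (2:ℝ)) ^ (1/2:ℝ) + (∑' i, Y i ^ (2:ℝ)) ^ (1/2:ℝ)) :=
        mul_le_mul_right (tsum_Mink X Y) _
    _ ≤ ENNReal.ofReal (2 ^ s) *
        ((∑' i, (Ws i * U i) ^ (2:ℝ)) ^ (1/2:ℝ) * (∑' i, V i) +
         (∑' i, (Ws i * V i) ^ (2:ℝ)) ^ (1/2:ℝ) * (∑' i, U i)) :=
        mul_le_mul_right (add_le_add (young _ _) (young _ _)) _
    _ ≤ ENNReal.ofReal (2 ^ s) *
        ((∑' i, (Ws i * U i) ^ (2:ℝ)) ^ (1/2:ℝ) *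
            (K ^ (1/2:ℝ) * (∑' i, (W0 i * V i) ^ (2:ℝ)) ^ (1/2:ℝ)) +
         (∑' i, (Ws i * V i) ^ (2:ℝ)) ^ (1/2:ℝ) *
            (K ^ (1/2:ℝ) * (∑' i, (W0 i * U i) ^ (2:ℝ)) ^ (1/2:ℝ))) :=
        mul_le_mul_right (add_le_add
          (mul_le_mul_right (l1_le_weighted s₀ V) _)
          (mul_le_mul_right (l1_le_weighted s₀ U) _)) _
    _ = c * (sobNorm u s * sobNorm v s₀) + c * (sobNorm u s₀ * sobNorm v s) := by
        rw [hueq, hveq, hueq0, hveq0, hcdef]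
        ring
    _ ≤ ENNReal.ofReal (c.toReal + 1) * sobNorm u s * sobNorm v s₀ +
        ENNReal.ofReal (c.toReal + 1) * sobNorm u s₀ * sobNorm v s := by
        have h1 : c * (sobNorm u s * sobNorm v s₀) ≤
            ENNReal.ofReal (c.toReal + 1) * sobNorm u s * sobNorm v s₀ := by
          rw [mul_assoc (ENNReal.ofReal (c.toReal + 1))]
          exact mul_le_mul_left hCle _
        have h2 : c * (sobNorm u s₀ * sobNorm v s) ≤
            ENNReal.ofReal (c.toReal + 1) * sobNorm u s₀ * sobNorm v s := by
          rw [mul_assoc (ENNReal.ofReal (c.toReal + 1))]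
          exact mul_le_mul_left hCle _
        exact add_le_add h1 h2
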